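/- Let d, k, i be positive integers with 1 ≤ i < k and d > C(k, i+1), where C(a,b) denotes the binomial coefficient. Then every k-uniform hypergraph H with i-th skeletal degeneracy d_i(H) ≥ d satisfies ex(n,H) ≥ a_k · n^{k − 3^k/d} for some constant a_k > 0 depending only on k and all sufficiently large n. -/

import Mathlib

open Finset

/-- A `k`-uniform hypergraph on vertex type `V`: a finite set of `k`-element edges. -/
structure HyperGraph (k : ℕ) (V : Type) where
  edges : Finset (Finset V)
  card_eq : ∀ e ∈ edges, e.card = k

/-- A finite set system `E` on `V` has degeneracy at most `d` if every nonempty induced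
subsystem has a vertex of degree at most `d`. -/
def degenLE {V : Type} [DecidableEq V] (E : Finset (Finset V)) (d : ℕ) : Prop :=
  ∀ U : Finset V, U.Nonempty → ∃ v ∈ U, (E.filter fun e => v ∈ e ∧ e ⊆ U).card ≤ d

/-- The degeneracy of a finite set system: the least `d` such that every nonempty
induced subsystem has minimum degree at most `d`. -/
noncomputable def degeneracy {V : Type} [DecidableEq V] (E : Finset (Finset V)) : ℕ :=
  sInf {d | degenLE E d}

namespace HyperGraph

variable {k : ℕ} {V W : Type}

/-- The edge set of the `i`-skeleton of `H`: all `(i+1)`-element subsets of edges of `H`. -/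
def skeleton [DecidableEq V] (H : HyperGraph k V) (i : ℕ) : Finset (Finset V) :=
  H.edges.biUnion fun e => e.powersetCard (i + 1)

/-- The `i`-th skeletal degeneracy `d_i(H)`: the degeneracy of the `i`-skeleton of `H`. -/
noncomputable def skelDegen [DecidableEq V] (H : HyperGraph k V) (i : ℕ) : ℕ :=
  degeneracy (H.skeleton i)

/-- The skeletal degeneracy `d_1(H)`: the degeneracy of the `1`-skeleton of `H`. -/
noncomputable def d1 [DecidableEq V] (H : HyperGraph k V) : ℕ := H.skelDegen 1

/-- `H` is `k`-partite with parts given by the fibers of `P`: every edge contains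
exactly one vertex from each part. -/
def IsPartite [DecidableEq V] (H : HyperGraph k V) (P : V → Fin k) : Prop :=
  ∀ e ∈ H.edges, ∀ i : Fin k, (e.filter fun v => P v = i).card = 1

/-- `G` contains a copy of `H`. -/
def ContainsCopy [DecidableEq V] [DecidableEq W] (G : HyperGraph k W) (H : HyperGraph k V) :
    Prop :=
  ∃ f : V → W, Function.Injective f ∧ ∀ e ∈ H.edges, e.image f ∈ G.edges

end HyperGraph

/-- The Turán number `ex(n, H)`: the maximum number of edges in a `k`-uniform hypergraph
on `n` vertices containing no copy of `H`. -/
noncomputable def turanNumber (k n : ℕ) {V : Type} [DecidableEq V] (H : HyperGraph k V) : ℕ :=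
  sSup {m | ∃ G : HyperGraph k (Fin n), G.edges.card = m ∧ ¬ G.ContainsCopy H}

/-- The `q`-color Ramsey number `r(H; q)`: the least `N` such that every `q`-coloring of the
`k`-subsets of an `N`-set contains a monochromatic copy of `H`. -/
noncomputable def ramseyNumber (k q : ℕ) {V : Type} [DecidableEq V] (H : HyperGraph k V) : ℕ :=
  sInf {N | ∀ c : Finset (Fin N) → Fin q,
    ∃ (f : V → Fin N) (i : Fin q), Function.Injective f ∧
      ∀ e ∈ H.edges, c (e.image f) = i}


namespace TLB


/-! ### Numeric auxiliary lemmas -/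

lemma choose_le_two_pow (n j : ℕ) : n.choose j ≤ 2 ^ n := by
  rcases le_or_gt j n with h | h
  · calc n.choose j ≤ ∑ m ∈ range (n + 1), n.choose m :=
        Finset.single_le_sum (fun m _ => Nat.zero_le _) (by simp [Nat.lt_succ_of_le h])
      _ = 2 ^ n := Nat.sum_range_choose n
  · simp [Nat.choose_eq_zero_of_lt h]

lemma mul_two_pow_lt_three_pow : ∀ k : ℕ, 1 ≤ k → k * 2 ^ (k - 1) < 3 ^ k := by
  intro k hk
  induction k with
  | zero => omega
  | succ m ih =>
    match m, ih with
    | 0, _ => decide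
    | 1, _ => decide
    | (m + 2), ih =>
      have ihm : (m + 2) * 2 ^ (m + 1) < 3 ^ (m + 2) := ih (by omega)
      show (m + 3) * 2 ^ (m + 2) < 3 ^ (m + 3)
      calc (m + 3) * 2 ^ (m + 2) = (2 * m + 6) * 2 ^ (m + 1) := by rw [pow_succ]; ring
        _ ≤ (3 * (m + 2)) * 2 ^ (m + 1) := Nat.mul_le_mul_right _ (by omega)
        _ = 3 * ((m + 2) * 2 ^ (m + 1)) := by ring
        _ < 3 * 3 ^ (m + 2) := by omega
        _ = 3 ^ (m + 3) := by rw [pow_succ]; ring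

lemma succ_mul_choose_lt_three_pow {k i : ℕ} (hik : i < k) :
    (i + 1) * k.choose (i + 1) < 3 ^ k := by
  have hk1 : 1 ≤ k := by omega
  have h := Nat.add_one_mul_choose_eq (k - 1) i
  have hs : k - 1 + 1 = k := by omega
  rw [hs] at h
  have hid : (i + 1) * k.choose (i + 1) = k * (k - 1).choose i := by
    rw [mul_comm]; exact h.symm
  calc (i + 1) * k.choose (i + 1) = k * (k - 1).choose i := hid
    _ ≤ k * 2 ^ (k - 1) := Nat.mul_le_mul_left _ (choose_le_two_pow _ _)
    _ < 3 ^ k := mul_two_pow_lt_three_pow k hk1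

lemma choose_lower {k n : ℕ} (hk : 1 ≤ k) (hn : 2 * k ≤ n) :
    (n : ℝ) ^ k ≤ (2 * k : ℝ) ^ k * (n.choose k : ℝ) := by
  have h1 : ((n + 1 - k) ^ k : ℕ) ≤ n.descFactorial k := Nat.pow_sub_le_descFactorial n k
  have h2 : n.descFactorial k = k.factorial * n.choose k :=
    Nat.descFactorial_eq_factorial_mul_choose n k
  have h3 : (k.factorial : ℝ) ≤ (k : ℝ) ^ k := by exact_mod_cast Nat.factorial_le_pow k
  have hcast : ((n + 1 - k : ℕ) : ℝ) ^ k ≤ (k.factorial : ℝ) * (n.choose k : ℝ) := by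
    rw [h2] at h1; exact_mod_cast h1
  have hhalf : (n : ℝ) ≤ 2 * ((n + 1 - k : ℕ) : ℝ) := by
    have : n ≤ 2 * (n + 1 - k) := by omega
    exact_mod_cast this
  have hnn : (0 : ℝ) ≤ (n : ℝ) := by positivity
  calc (n : ℝ) ^ k ≤ (2 * ((n + 1 - k : ℕ) : ℝ)) ^ k := by
        exact pow_le_pow_left₀ hnn hhalf k
    _ = 2 ^ k * ((n + 1 - k : ℕ) : ℝ) ^ k := by rw [mul_pow]
    _ ≤ 2 ^ k * ((k.factorial : ℝ) * (n.choose k : ℝ)) := by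
        apply mul_le_mul_of_nonneg_left hcast (by positivity)
    _ ≤ 2 ^ k * ((k : ℝ) ^ k * (n.choose k : ℝ)) := by
        apply mul_le_mul_of_nonneg_left _ (by positivity)
        exact mul_le_mul_of_nonneg_right h3 (by positivity)
    _ = (2 * k : ℝ) ^ k * (n.choose k : ℝ) := by rw [mul_pow]; ring

lemma ceil_div_le_of_mul {d u s m : ℕ} (hs : 0 < s) (h : d * u ≤ m * s) :
    (d * u + (s - 1)) / s ≤ m := by
  rw [Nat.div_le_iff_le_mul_add_pred hs]
  calc d * u + (s - 1) ≤ m * s + (s - 1) := by omega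
    _ = s * m + (s - 1) := by ring_nf

lemma le_mul_ceil_div {d u s : ℕ} (hs : 0 < s) : d * u ≤ s * ((d * u + (s - 1)) / s) := by
  have h := (Nat.div_le_iff_le_mul_add_pred hs
      (a := d * u + (s - 1)) (c := (d * u + (s - 1)) / s)).1 le_rfl
  omega

/-! ### The weighted-average random hypergraph -/

variable {ι : Type*} [DecidableEq ι]

/-- Bernoulli(q)-product weight of the subset `F` of the ground set `S`. -/
noncomputable def wt (S : Finset ι) (q : ℝ) (F : Finset ι) : ℝ :=
  q ^ F.card * (1 - q) ^ (S.card - F.card)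

omit [DecidableEq ι] in
lemma wt_nonneg {S : Finset ι} {q : ℝ} (h0 : 0 ≤ q) (h1 : q ≤ 1) (F : Finset ι) :
    0 ≤ wt S q F := by
  have h2 : (0:ℝ) ≤ 1 - q := by linarith
  exact mul_nonneg (pow_nonneg h0 _) (pow_nonneg h2 _)

omit [DecidableEq ι] in
lemma wt_pos {S : Finset ι} {q : ℝ} (h0 : 0 < q) (h1 : q < 1) (F : Finset ι) :
    0 < wt S q F := by
  have h2 : (0:ℝ) < 1 - q := by linarith
  exact mul_pos (pow_pos h0 _) (pow_pos h2 _)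

lemma sum_wt (S : Finset ι) (q : ℝ) : ∑ F ∈ S.powerset, wt S q F = 1 := by
  have h := Finset.prod_add (fun _ : ι => q) (fun _ : ι => 1 - q) S
  have hL : (∏ _i ∈ S, (q + (1 - q))) = 1 := by
    simp
  rw [hL] at h
  simp only [Finset.prod_const] at h
  calc ∑ F ∈ S.powerset, wt S q F
      = ∑ F ∈ S.powerset, q ^ F.card * (1 - q) ^ (S \ F).card := by
        apply Finset.sum_congr rfl
        intro F hF
        unfold wt
        rw [Finset.card_sdiff_of_subset (Finset.mem_powerset.1 hF)]
    _ = 1 := h.symm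

lemma sum_wt_superset {S A : Finset ι} (hA : A ⊆ S) (q : ℝ) :
    ∑ F ∈ S.powerset, (if A ⊆ F then wt S q F else 0) = q ^ A.card := by
  rw [Finset.sum_ite, Finset.sum_const_zero, add_zero]
  have hbij : ∑ F ∈ S.powerset.filter (fun F => A ⊆ F), wt S q F
      = ∑ F' ∈ (S \ A).powerset, wt S q (F' ∪ A) := by
    apply Finset.sum_nbij' (fun F => F \ A) (fun F' => F' ∪ A)
    · intro F hF
      simp only [Finset.mem_filter, Finset.mem_powerset] at hF
      exact Finset.mem_powerset.2 (Finset.sdiff_subset_sdiff hF.1 Finset.Subset.rfl)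
    · intro F' hF'
      simp only [Finset.mem_powerset] at hF'
      simp only [Finset.mem_filter, Finset.mem_powerset]
      exact ⟨Finset.union_subset (hF'.trans Finset.sdiff_subset) hA,
        Finset.subset_union_right⟩
    · intro F hF
      simp only [Finset.mem_filter, Finset.mem_powerset] at hF
      rw [Finset.sdiff_union_self_eq_union, Finset.union_eq_left.2 hF.2]
    · intro F' hF'
      simp only [Finset.mem_powerset] at hF'
      rw [Finset.union_sdiff_right]
      exact Finset.sdiff_eq_self_of_disjoint
        (Finset.disjoint_of_subset_left hF' Finset.sdiff_disjoint)
    · intro F hF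
      simp only [Finset.mem_filter, Finset.mem_powerset] at hF
      rw [Finset.sdiff_union_self_eq_union, Finset.union_eq_left.2 hF.2]
  rw [hbij]
  calc ∑ F' ∈ (S \ A).powerset, wt S q (F' ∪ A)
      = ∑ F' ∈ (S \ A).powerset, q ^ A.card * wt (S \ A) q F' := by
        apply Finset.sum_congr rfl
        intro F' hF'
        have hsub : F' ⊆ S \ A := Finset.mem_powerset.1 hF'
        have hdisj : Disjoint F' A :=
          Finset.disjoint_of_subset_left hsub Finset.sdiff_disjoint
        have hF'card : F'.card ≤ S.card - A.card := by
          have := Finset.card_le_card hsub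
          rwa [Finset.card_sdiff_of_subset hA] at this
        have hAS : A.card ≤ S.card := Finset.card_le_card hA
        unfold wt
        rw [Finset.card_union_of_disjoint hdisj, Finset.card_sdiff_of_subset hA, pow_add]
        have he : S.card - (F'.card + A.card) = S.card - A.card - F'.card := by omega
        rw [he]; ring
    _ = q ^ A.card := by rw [← Finset.mul_sum, sum_wt, mul_one]



variable {ι : Type*} [DecidableEq ι]


variable [Fintype ι]

/-- ground set: all `s`-element subsets -/
def Om (ι : Type*) [Fintype ι] [DecidableEq ι] (s : ℕ) : Finset (Finset ι) :=
  univ.powersetCard s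

/-- the `k`-sets all of whose `s`-subsets lie in `F` -/
def cliq (s k : ℕ) (F : Finset (Finset ι)) : Finset (Finset ι) :=
  (univ.powersetCard k).filter (fun K => K.powersetCard s ⊆ F)

/-- sets of size at most `v0` on which `F` has minimum degree at least `d` -/
def badW (s d v0 : ℕ) (F : Finset (Finset ι)) : Finset (Finset ι) :=
  (univ.powerset.filter (fun W => W.card ≤ v0)).filter
    (fun W => ∀ w ∈ W, d ≤ (F.filter fun e => w ∈ e ∧ e ⊆ W).card)

def prune (s d v0 : ℕ) (F : Finset (Finset ι)) : Finset (Finset ι) :=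
  F.filter (fun e => ∀ W ∈ badW s d v0 F, ¬ e ⊆ W)

lemma prune_subset (s d v0 : ℕ) (F : Finset (Finset ι)) : prune s d v0 F ⊆ F :=
  Finset.filter_subset _ _

/-- key freeness fact: no nonempty small set has min degree `≥ d` in the pruned system -/
lemma prune_no_bad {s d v0 : ℕ} (hd : 1 ≤ d) (F : Finset (Finset ι)) (W : Finset ι)
    (hWv : W.card ≤ v0) (hW : W.Nonempty)
    (hdeg : ∀ w ∈ W, d ≤ ((prune s d v0 F).filter fun e => w ∈ e ∧ e ⊆ W).card) : False := by
  have hWbad : W ∈ badW s d v0 F := by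
    refine Finset.mem_filter.2 ⟨Finset.mem_filter.2 ⟨Finset.mem_powerset.2 (subset_univ W), hWv⟩, ?_⟩
    intro w hw
    exact le_trans (hdeg w hw)
      (Finset.card_le_card (Finset.monotone_filter_left _ (prune_subset s d v0 F)))
  obtain ⟨w, hw⟩ := hW
  have h1 : 1 ≤ ((prune s d v0 F).filter fun e => w ∈ e ∧ e ⊆ W).card :=
    le_trans hd (hdeg w hw)
  obtain ⟨e, he⟩ := Finset.card_pos.1 h1
  rw [Finset.mem_filter] at he
  have hep := Finset.mem_filter.1 he.1
  exact hep.2 W hWbad he.2.2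

/-- Expected number of cliques. -/
lemma exp_cliq (s k : ℕ) (q : ℝ) :
    ∑ F ∈ (Om ι s).powerset, wt (Om ι s) q F * ((cliq s k F).card : ℝ)
      = ((Fintype.card ι).choose k : ℝ) * q ^ (k.choose s) := by
  have hcard : ∀ F : Finset (Finset ι), ((cliq s k F).card : ℝ)
      = ∑ K ∈ univ.powersetCard k, (if K.powersetCard s ⊆ F then (1:ℝ) else 0) := by
    intro F
    rw [cliq, Finset.card_filter]
    push_cast
    apply Finset.sum_congr rfl
    intro K _
    split <;> simp
  calc ∑ F ∈ (Om ι s).powerset, wt (Om ι s) q F * ((cliq s k F).card : ℝ)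
      = ∑ F ∈ (Om ι s).powerset, ∑ K ∈ univ.powersetCard k,
          (if K.powersetCard s ⊆ F then wt (Om ι s) q F else 0) := by
        apply Finset.sum_congr rfl
        intro F _
        rw [hcard F, Finset.mul_sum]
        apply Finset.sum_congr rfl
        intro K _
        split <;> simp
    _ = ∑ K ∈ univ.powersetCard k, ∑ F ∈ (Om ι s).powerset,
          (if K.powersetCard s ⊆ F then wt (Om ι s) q F else 0) := Finset.sum_comm
    _ = ∑ K ∈ univ.powersetCard k, q ^ (k.choose s) := by
        apply Finset.sum_congr rfl
        intro K hK
        have hKcard : K.card = k := (Finset.mem_powersetCard_univ.1 hK)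
        have hsub : K.powersetCard s ⊆ Om ι s := by
          intro S hS
          rw [Finset.mem_powersetCard] at hS
          exact Finset.mem_powersetCard_univ.2 hS.2
        rw [sum_wt_superset hsub q, Finset.card_powersetCard, hKcard]
    _ = ((Fintype.card ι).choose k : ℝ) * q ^ (k.choose s) := by
        rw [Finset.sum_const, Finset.card_powersetCard, Finset.card_univ, nsmul_eq_mul]

/-- deterministic deletion bound -/
lemma cliq_prune_card {s d v0 k : ℕ} (F : Finset (Finset ι)) (hF : F ⊆ Om ι s) :
    ((cliq s k F).card : ℕ) ≤ (cliq s k (prune s d v0 F)).card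
      + (∑ W ∈ badW s d v0 F, W.card.choose s) * (Fintype.card ι).choose (k - s) := by
  set P := prune s d v0 F with hP
  have hcs : cliq s k P ⊆ cliq s k F := by
    intro K hK
    rw [cliq, Finset.mem_filter] at hK ⊢
    exact ⟨hK.1, hK.2.trans (prune_subset s d v0 F)⟩
  have step1 : (cliq s k F).card ≤ (cliq s k F \ cliq s k P).card + (cliq s k P).card :=
    Finset.card_le_card_sdiff_add_card
  have step2 : cliq s k F \ cliq s k P ⊆
      (F \ P).biUnion (fun e => (univ.powersetCard k).filter (fun K => e ⊆ K)) := by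
    intro K hK
    rw [Finset.mem_sdiff] at hK
    obtain ⟨hK1, hK2⟩ := hK
    rw [cliq, Finset.mem_filter] at hK1
    have : ¬ (K.powersetCard s ⊆ P) := by
      intro h
      exact hK2 (Finset.mem_filter.2 ⟨hK1.1, h⟩)
    obtain ⟨e, he, heP⟩ := Finset.not_subset.1 this
    refine Finset.mem_biUnion.2 ⟨e, Finset.mem_sdiff.2 ⟨hK1.2 he, heP⟩, ?_⟩
    refine Finset.mem_filter.2 ⟨hK1.1, (Finset.mem_powersetCard.1 he).1⟩
  have step3 : ∀ e ∈ F \ P,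
      ((univ.powersetCard k).filter (fun K => e ⊆ K)).card ≤ (Fintype.card ι).choose (k - s) := by
    intro e he
    have heF : e ∈ F := (Finset.mem_sdiff.1 he).1
    have hecard : e.card = s := (Finset.mem_powersetCard_univ.1 (hF heF))
    have : ((univ.powersetCard k).filter (fun K => e ⊆ K)).card
        ≤ (univ.powersetCard (k - s) : Finset (Finset ι)).card := by
      apply Finset.card_le_card_of_injOn (fun K => K \ e)
      · intro K hK
        rw [Finset.mem_coe, Finset.mem_filter] at hK
        rw [Finset.mem_coe, Finset.mem_powersetCard]
        refine ⟨Finset.subset_univ _, ?_⟩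
        rw [Finset.card_sdiff_of_subset hK.2, (Finset.mem_powersetCard_univ.1 hK.1), hecard]
      · intro K1 h1 K2 h2 heq
        rw [Finset.mem_coe, Finset.mem_filter] at h1 h2
        have e1 : K1 = (K1 \ e) ∪ e := by
          rw [Finset.sdiff_union_self_eq_union, Finset.union_eq_left.2 h1.2]
        have e2 : K2 = (K2 \ e) ∪ e := by
          rw [Finset.sdiff_union_self_eq_union, Finset.union_eq_left.2 h2.2]
        rw [e1, e2]; simp only at heq; rw [heq]
    rwa [Finset.card_powersetCard, Finset.card_univ] at this
  have step4 : (F \ P).card ≤ ∑ W ∈ badW s d v0 F, W.card.choose s := by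
    have hsub : F \ P ⊆ (badW s d v0 F).biUnion (fun W => W.powersetCard s) := by
      intro e he
      rw [Finset.mem_sdiff] at he
      obtain ⟨heF, heP⟩ := he
      rw [hP, prune, Finset.mem_filter] at heP
      push_neg at heP
      obtain ⟨W, hWbad, heW⟩ := heP heF
      refine Finset.mem_biUnion.2 ⟨W, hWbad, ?_⟩
      rw [Finset.mem_powersetCard]
      exact ⟨heW, Finset.mem_powersetCard_univ.1 (hF heF)⟩
    calc (F \ P).card ≤ ((badW s d v0 F).biUnion (fun W => W.powersetCard s)).card :=
          Finset.card_le_card hsub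
      _ ≤ ∑ W ∈ badW s d v0 F, (W.powersetCard s).card := Finset.card_biUnion_le
      _ = ∑ W ∈ badW s d v0 F, W.card.choose s := by
          apply Finset.sum_congr rfl; intro W _; rw [Finset.card_powersetCard]
  calc (cliq s k F).card ≤ (cliq s k F \ cliq s k P).card + (cliq s k P).card := step1
    _ ≤ (∑ e ∈ F \ P, ((univ.powersetCard k).filter (fun K => e ⊆ K)).card)
        + (cliq s k P).card := by
        gcongr
        exact le_trans (Finset.card_le_card step2) Finset.card_biUnion_le
    _ ≤ (F \ P).card * (Fintype.card ι).choose (k - s) + (cliq s k P).card := by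
        gcongr
        exact Finset.sum_le_card_nsmul _ _ _ step3
    _ ≤ (∑ W ∈ badW s d v0 F, W.card.choose s) * (Fintype.card ι).choose (k - s)
        + (cliq s k P).card := by
        gcongr
    _ = (cliq s k P).card
        + (∑ W ∈ badW s d v0 F, W.card.choose s) * (Fintype.card ι).choose (k - s) := by ring



variable {ι : Type*} [DecidableEq ι]


variable [Fintype ι]



/-- number of required edges -/
def tt (d s u : ℕ) : ℕ := (d * u + (s - 1)) / s

/-- a set with min degree `≥ d` contains at least `tt d s u` edges -/
lemma bad_many_edges {s d : ℕ} (hs : 0 < s) {F : Finset (Finset ι)} (hF : F ⊆ Om ι s)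
    {W : Finset ι} (hdeg : ∀ w ∈ W, d ≤ (F.filter fun e => w ∈ e ∧ e ⊆ W).card) :
    tt d s W.card ≤ (F.filter (fun e => e ⊆ W)).card := by
  set FW := F.filter (fun e => e ⊆ W) with hFW
  have hdouble : ∑ w ∈ W, (F.filter fun e => w ∈ e ∧ e ⊆ W).card
      = ∑ e ∈ FW, (W.filter (fun w => w ∈ e)).card := by
    have h1 : ∀ w, (F.filter fun e => w ∈ e ∧ e ⊆ W) = FW.filter (fun e => w ∈ e) := by
      intro w
      rw [hFW, Finset.filter_filter]
      apply Finset.filter_congr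
      intro e _
      tauto
    calc ∑ w ∈ W, (F.filter fun e => w ∈ e ∧ e ⊆ W).card
        = ∑ w ∈ W, ∑ e ∈ FW, (if w ∈ e then 1 else 0) := by
          apply Finset.sum_congr rfl
          intro w _
          rw [h1 w, Finset.card_filter]
      _ = ∑ e ∈ FW, ∑ w ∈ W, (if w ∈ e then 1 else 0) := Finset.sum_comm
      _ = ∑ e ∈ FW, (W.filter (fun w => w ∈ e)).card := by
          apply Finset.sum_congr rfl
          intro e _
          rw [Finset.card_filter]
  have hedge : ∀ e ∈ FW, (W.filter (fun w => w ∈ e)).card = s := by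
    intro e he
    rw [hFW, Finset.mem_filter] at he
    have : W.filter (fun w => w ∈ e) = e := by
      rw [Finset.filter_mem_eq_inter, Finset.inter_eq_right.2 he.2]
    rw [this]
    exact Finset.mem_powersetCard_univ.1 (hF he.1)
  have hlow : d * W.card ≤ FW.card * s := by
    calc d * W.card = ∑ _w ∈ W, d := by rw [Finset.sum_const, smul_eq_mul, mul_comm]
      _ ≤ ∑ w ∈ W, (F.filter fun e => w ∈ e ∧ e ⊆ W).card :=
          Finset.sum_le_sum hdeg
      _ = ∑ e ∈ FW, (W.filter (fun w => w ∈ e)).card := hdouble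
      _ = FW.card * s := by
          rw [Finset.sum_congr rfl hedge, Finset.sum_const, smul_eq_mul]
  exact ceil_div_le_of_mul hs hlow

/-- per-configuration indicator bound -/
lemma indicator_le {s d : ℕ} (hs : 0 < s) {F : Finset (Finset ι)} (hF : F ⊆ Om ι s)
    (W : Finset ι) :
    (if (∀ w ∈ W, d ≤ (F.filter fun e => w ∈ e ∧ e ⊆ W).card) then (1:ℝ) else 0)
      ≤ ∑ T ∈ (W.powersetCard s).powersetCard (tt d s W.card),
          (if T ⊆ F then (1:ℝ) else 0) := by
  split
  · next hcond =>
    have hmany := bad_many_edges hs hF hcond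
    set FW := F.filter (fun e => e ⊆ W) with hFW
    obtain ⟨T, hTsub, hTcard⟩ := Finset.exists_subset_card_eq hmany
    have hTmem : T ∈ (W.powersetCard s).powersetCard (tt d s W.card) := by
      rw [Finset.mem_powersetCard]
      refine ⟨?_, hTcard⟩
      intro e he
      have := hTsub he
      rw [hFW, Finset.mem_filter] at this
      rw [Finset.mem_powersetCard]
      exact ⟨this.2, Finset.mem_powersetCard_univ.1 (hF this.1)⟩
    have hTF : T ⊆ F := hTsub.trans (Finset.filter_subset _ _)
    calc (1:ℝ) = (if T ⊆ F then (1:ℝ) else 0) := by rw [if_pos hTF]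
      _ ≤ ∑ T' ∈ (W.powersetCard s).powersetCard (tt d s W.card),
            (if T' ⊆ F then (1:ℝ) else 0) := by
          apply Finset.single_le_sum (f := fun T' => (if T' ⊆ F then (1:ℝ) else 0))
            (fun T' _ => by split <;> norm_num) hTmem
  · next =>
    apply Finset.sum_nonneg
    intro T _
    split <;> norm_num

/-- expected weighted count of bad configurations -/
lemma exp_bad {s d v0 : ℕ} (hs : 0 < s) {q : ℝ} (hq0 : 0 ≤ q) (hq1 : q ≤ 1) :
    ∑ F ∈ (Om ι s).powerset, wt (Om ι s) q F
        * (∑ W ∈ badW s d v0 F, (W.card.choose s : ℝ))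
      ≤ ∑ u ∈ Finset.range (v0 + 1), ((Fintype.card ι).choose u : ℝ)
          * ((u.choose s : ℝ) * ((u.choose s).choose (tt d s u) : ℝ) * q ^ (tt d s u)) := by
  classical
  set allW : Finset (Finset ι) := univ.powerset.filter (fun W => W.card ≤ v0) with hallW
  -- rewrite inner sum over badW as sum over allW with indicator
  have hsplit : ∀ F ∈ (Om ι s).powerset, wt (Om ι s) q F
      * (∑ W ∈ badW s d v0 F, (W.card.choose s : ℝ))
      = ∑ W ∈ allW, (W.card.choose s : ℝ) *
          (if (∀ w ∈ W, d ≤ (F.filter fun e => w ∈ e ∧ e ⊆ W).card)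
            then wt (Om ι s) q F else 0) := by
    intro F _
    rw [badW, Finset.sum_filter, Finset.mul_sum]
    apply Finset.sum_congr rfl
    intro W _
    split <;> ring
  rw [Finset.sum_congr rfl hsplit, Finset.sum_comm]
  -- per-W bound
  have hperW : ∀ W ∈ allW,
      ∑ F ∈ (Om ι s).powerset, (W.card.choose s : ℝ) *
          (if (∀ w ∈ W, d ≤ (F.filter fun e => w ∈ e ∧ e ⊆ W).card)
            then wt (Om ι s) q F else 0)
      ≤ (W.card.choose s : ℝ) * ((W.card.choose s).choose (tt d s W.card) : ℝ)
          * q ^ (tt d s W.card) := by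
    intro W _
    have hstep : ∀ F ∈ (Om ι s).powerset,
        (if (∀ w ∈ W, d ≤ (F.filter fun e => w ∈ e ∧ e ⊆ W).card)
          then wt (Om ι s) q F else 0)
        ≤ ∑ T ∈ (W.powersetCard s).powersetCard (tt d s W.card),
            (if T ⊆ F then wt (Om ι s) q F else 0) := by
      intro F hFmem
      have hF : F ⊆ Om ι s := Finset.mem_powerset.1 hFmem
      have hind := indicator_le (d := d) hs hF W
      have hwnn := wt_nonneg hq0 hq1 (S := Om ι s) F
      calc (if (∀ w ∈ W, d ≤ (F.filter fun e => w ∈ e ∧ e ⊆ W).card)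
            then wt (Om ι s) q F else 0)
          = wt (Om ι s) q F * (if (∀ w ∈ W, d ≤ (F.filter fun e => w ∈ e ∧ e ⊆ W).card)
              then (1:ℝ) else 0) := by split <;> ring
        _ ≤ wt (Om ι s) q F * ∑ T ∈ (W.powersetCard s).powersetCard (tt d s W.card),
              (if T ⊆ F then (1:ℝ) else 0) := by
            exact mul_le_mul_of_nonneg_left hind hwnn
        _ = ∑ T ∈ (W.powersetCard s).powersetCard (tt d s W.card),
              (if T ⊆ F then wt (Om ι s) q F else 0) := by
            rw [Finset.mul_sum]
            apply Finset.sum_congr rfl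
            intro T _
            split <;> ring
    calc ∑ F ∈ (Om ι s).powerset, (W.card.choose s : ℝ) *
            (if (∀ w ∈ W, d ≤ (F.filter fun e => w ∈ e ∧ e ⊆ W).card)
              then wt (Om ι s) q F else 0)
        ≤ ∑ F ∈ (Om ι s).powerset, (W.card.choose s : ℝ) *
            ∑ T ∈ (W.powersetCard s).powersetCard (tt d s W.card),
              (if T ⊆ F then wt (Om ι s) q F else 0) := by
          apply Finset.sum_le_sum
          intro F hFmem
          exact mul_le_mul_of_nonneg_left (hstep F hFmem) (by positivity)
      _ = (W.card.choose s : ℝ) * ∑ T ∈ (W.powersetCard s).powersetCard (tt d s W.card),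
            ∑ F ∈ (Om ι s).powerset, (if T ⊆ F then wt (Om ι s) q F else 0) := by
          rw [← Finset.mul_sum]
          congr 1
          exact Finset.sum_comm
      _ = (W.card.choose s : ℝ) * ∑ T ∈ (W.powersetCard s).powersetCard (tt d s W.card),
            q ^ (tt d s W.card) := by
          congr 1
          apply Finset.sum_congr rfl
          intro T hT
          rw [Finset.mem_powersetCard] at hT
          have hTOm : T ⊆ Om ι s := by
            intro e he
            have := hT.1 he
            rw [Finset.mem_powersetCard] at this
            exact Finset.mem_powersetCard_univ.2 this.2
          rw [sum_wt_superset hTOm q, hT.2]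
      _ = (W.card.choose s : ℝ) * ((W.card.choose s).choose (tt d s W.card) : ℝ)
            * q ^ (tt d s W.card) := by
          rw [Finset.sum_const, Finset.card_powersetCard, Finset.card_powersetCard,
            nsmul_eq_mul]
          ring
  -- group by cardinality
  calc ∑ W ∈ allW, ∑ F ∈ (Om ι s).powerset, (W.card.choose s : ℝ) *
          (if (∀ w ∈ W, d ≤ (F.filter fun e => w ∈ e ∧ e ⊆ W).card)
            then wt (Om ι s) q F else 0)
      ≤ ∑ W ∈ allW, (W.card.choose s : ℝ) * ((W.card.choose s).choose (tt d s W.card) : ℝ)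
          * q ^ (tt d s W.card) := Finset.sum_le_sum hperW
    _ = ∑ u ∈ Finset.range (v0 + 1), ∑ W ∈ allW.filter (fun W => W.card = u),
          (W.card.choose s : ℝ) * ((W.card.choose s).choose (tt d s W.card) : ℝ)
            * q ^ (tt d s W.card) := by
        rw [Finset.sum_fiberwise_of_maps_to]
        intro W hW
        rw [hallW, Finset.mem_filter] at hW
        rw [Finset.mem_range]
        omega
    _ ≤ ∑ u ∈ Finset.range (v0 + 1), ((Fintype.card ι).choose u : ℝ)
          * ((u.choose s : ℝ) * ((u.choose s).choose (tt d s u) : ℝ) * q ^ (tt d s u)) := by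
        apply Finset.sum_le_sum
        intro u _
        have hfil : allW.filter (fun W => W.card = u) ⊆ univ.powersetCard u := by
          intro W hW
          rw [Finset.mem_filter] at hW
          exact Finset.mem_powersetCard_univ.2 hW.2
        calc ∑ W ∈ allW.filter (fun W => W.card = u),
              (W.card.choose s : ℝ) * ((W.card.choose s).choose (tt d s W.card) : ℝ)
                * q ^ (tt d s W.card)
            = ∑ _W ∈ allW.filter (fun W => W.card = u),
              (u.choose s : ℝ) * ((u.choose s).choose (tt d s u) : ℝ) * q ^ (tt d s u) := by
              apply Finset.sum_congr rfl
              intro W hW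
              rw [Finset.mem_filter] at hW
              rw [hW.2]
          _ ≤ ((Fintype.card ι).choose u : ℝ)
              * ((u.choose s : ℝ) * ((u.choose s).choose (tt d s u) : ℝ) * q ^ (tt d s u)) := by
              rw [Finset.sum_const, nsmul_eq_mul]
              have hpos : (0:ℝ) ≤ (u.choose s : ℝ) * ((u.choose s).choose (tt d s u) : ℝ)
                  * q ^ (tt d s u) := by positivity
              have hcardle : ((allW.filter (fun W => W.card = u)).card : ℝ)
                  ≤ ((Fintype.card ι).choose u : ℝ) := by
                have := Finset.card_le_card hfil
                rw [Finset.card_powersetCard, Finset.card_univ] at this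
                exact_mod_cast this
              exact mul_le_mul_of_nonneg_right hcardle hpos


end TLB

namespace TLB

/-- If `G`'s edges are the cliques of a pruned system, `G` contains no copy of `H`
whenever `H`'s `i`-skeleton has a nonempty min-degree-`d` witness. -/
lemma no_copy {k i d v0 : ℕ} (hd : 1 ≤ d) {V : Type} [Fintype V] [DecidableEq V]
    (H : HyperGraph k V) (hv0 : Fintype.card V ≤ v0)
    (U0 : Finset V) (hU0ne : U0.Nonempty)
    (hU0 : ∀ v ∈ U0, d ≤ ((H.skeleton i).filter fun e => v ∈ e ∧ e ⊆ U0).card)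
    {n : ℕ} (F : Finset (Finset (Fin n)))
    (G : HyperGraph k (Fin n)) (hG : G.edges = cliq (i+1) k (prune (i+1) d v0 F)) :
    ¬ G.ContainsCopy H := by
  rintro ⟨f, hfinj, hfmap⟩
  apply prune_no_bad (s := i+1) (v0 := v0) hd F (U0.image f)
  · exact (Finset.card_image_le).trans
      (((Finset.card_le_univ U0).trans_eq Finset.card_univ).trans hv0)
  · exact hU0ne.image f
  · intro w hw
    obtain ⟨v, hv, rfl⟩ := Finset.mem_image.1 hw
    refine le_trans (hU0 v hv) ?_
    apply Finset.card_le_card_of_injOn (fun S => S.image f)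
    · intro S hS
      rw [Finset.mem_coe, Finset.mem_filter] at hS
      obtain ⟨hSskel, hvS, hSU0⟩ := hS
      obtain ⟨eH, heH, hSe⟩ := Finset.mem_biUnion.1 hSskel
      rw [Finset.mem_powersetCard] at hSe
      have hGe := hfmap eH heH
      rw [hG, cliq, Finset.mem_filter] at hGe
      refine Finset.mem_filter.2 ⟨?_, Finset.mem_image_of_mem f hvS,
        Finset.image_subset_image hSU0⟩
      apply hGe.2
      rw [Finset.mem_powersetCard]
      exact ⟨Finset.image_subset_image hSe.1,
        by rw [Finset.card_image_of_injective S hfinj, hSe.2]⟩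
    · intro S1 _ S2 _ h
      exact Finset.image_injective hfinj h

end TLB

set_option maxHeartbeats 2000000 in
/-- **Theorem (Turán lower bound via `i`-th skeletal degeneracy).** There is a constant
`a_k > 0` depending only on `k` such that for all `1 ≤ i < k` and `d > C(k, i+1)`, every
`k`-uniform hypergraph `H` with `d_i(H) ≥ d` satisfies `ex(n,H) ≥ a_k · n^(k − 3^k/d)`
for all sufficiently large `n`. -/
theorem turan_lower_bound_ith_skeletal (k : ℕ) :
    ∃ a > (0 : ℝ),
      ∀ d i : ℕ, 1 ≤ i → i < k → Nat.choose k (i + 1) < d →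
      ∀ (V : Type) [Fintype V] [DecidableEq V] (H : HyperGraph k V),
        d ≤ H.skelDegen i →
        ∃ n0 : ℕ, ∀ n : ℕ, n0 ≤ n →
          a * (n : ℝ) ^ ((k : ℝ) - (3 : ℝ) ^ k / (d : ℝ)) ≤ (turanNumber k n H : ℝ) := by
  classical
  have hbase : (0:ℝ) < 2*(2*(k:ℝ))^k := by
    rcases Nat.eq_zero_or_pos k with hk0 | hk0
    · subst hk0; norm_num
    · have hkR : (0:ℝ) < (k:ℝ) := by exact_mod_cast hk0
      have h2k : (0:ℝ) < 2*(k:ℝ) := by linarith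
      have := pow_pos h2k k
      linarith
  have haA : (0:ℝ) < (2*(2*(k:ℝ))^k)⁻¹ := inv_pos.2 hbase
  refine ⟨(2*(2*(k:ℝ))^k)⁻¹, haA, ?_⟩
  intro d i hi hik hd V _ _ H hH
  set A : ℝ := (2*(2*(k:ℝ))^k)⁻¹ with hA_def
  set s : ℕ := i + 1 with hs_def
  set v0 : ℕ := Fintype.card V with hv0_def
  -- basic numeric facts
  have hk2 : 2 ≤ k := by omega
  have hk1 : 1 ≤ k := by omega
  have hsk : s ≤ k := by omega
  have hs0 : 0 < s := by omega
  have hC1 : 1 ≤ k.choose s := Nat.choose_pos hsk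
  have hCd : k.choose s < d := hd
  have hd1 : 1 ≤ d := by omega
  have hsC3 : s * k.choose s < 3 ^ k := TLB.succ_mul_choose_lt_three_pow hik
  -- real constants
  set Ck : ℝ := (k.choose s : ℝ) with hCk_def
  have hCk0 : (0:ℝ) < Ck := by rw [hCk_def]; exact_mod_cast hC1
  have hd0R : (0:ℝ) < (d:ℝ) := by exact_mod_cast hd1
  have hCkd : Ck < (d:ℝ) := by rw [hCk_def]; exact_mod_cast hCd
  set γ : ℝ := (3:ℝ)^k / ((d:ℝ) * Ck) with hγ_def
  have hγ0 : 0 < γ := by positivity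
  set ε : ℝ := (3:ℝ)^k / Ck - (3:ℝ)^k / (d:ℝ) with hε_def
  have hε0 : 0 < ε := by
    have := div_lt_div_of_pos_left (show (0:ℝ) < 3^k by positivity) hCk0 hCkd
    simpa [hε_def, sub_pos] using this
  set c2 : ℝ := ∑ u ∈ Finset.range (v0+1), ((u.choose s : ℝ) * (2:ℝ)^(u.choose s)) with hc2_def
  -- skeleton witness
  have hU : ∃ U0 : Finset V, U0.Nonempty ∧
      ∀ v ∈ U0, d ≤ ((H.skeleton i).filter fun e => v ∈ e ∧ e ⊆ U0).card := by
    by_contra hcon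
    push_neg at hcon
    have hdeg : degenLE (H.skeleton i) (d-1) := by
      intro U hUne
      obtain ⟨v, hv, hlt⟩ := hcon U hUne
      exact ⟨v, hv, by omega⟩
    have hle : H.skelDegen i ≤ d - 1 := Nat.sInf_le hdeg
    omega
  obtain ⟨U0, hU0ne, hU0⟩ := hU
  -- choice of n0
  have htend : Filter.Tendsto (fun n : ℕ => A * (n:ℝ) ^ ε) Filter.atTop Filter.atTop := by
    apply Filter.Tendsto.const_mul_atTop haA
    exact (tendsto_rpow_atTop hε0).comp tendsto_natCast_atTop_atTop
  obtain ⟨N, hN⟩ := Filter.eventually_atTop.1 (htend.eventually_ge_atTop c2)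
  refine ⟨max N (2*k+2), ?_⟩
  intro n hn
  have hnN : N ≤ n := le_trans (le_max_left _ _) hn
  have hn2k : 2*k ≤ n := by have := le_trans (le_max_right _ _) hn; omega
  have hn2 : 2 ≤ n := by have := le_trans (le_max_right _ _) hn; omega
  have hc2n : c2 ≤ A * (n:ℝ) ^ ε := hN n hnN
  set x : ℝ := (n:ℝ) with hx_def
  have hx0 : (0:ℝ) < x := by
    rw [hx_def]; exact_mod_cast (by omega : 0 < n)
  have hx1 : (1:ℝ) ≤ x := by rw [hx_def]; exact_mod_cast (by omega : 1 ≤ n)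
  have hx1' : (1:ℝ) < x := by rw [hx_def]; exact_mod_cast (by omega : 1 < n)
  set q : ℝ := x ^ (-γ) with hq_def
  have hq0 : 0 < q := Real.rpow_pos_of_pos hx0 _
  have hq1 : q ≤ 1 := Real.rpow_le_one_of_one_le_of_nonpos hx1 (by linarith)
  have hqlt : q < 1 := Real.rpow_lt_one_of_one_lt_of_neg hx1' (by linarith)
  have hqpow : ∀ m : ℕ, q ^ m = x ^ (-(γ * (m:ℝ))) := by
    intro m
    rw [hq_def, ← Real.rpow_natCast (x ^ (-γ)) m, ← Real.rpow_mul hx0.le]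
    congr 1; ring
  -- the expected number of cliques
  have hexp1 : ∑ F ∈ (TLB.Om (Fin n) s).powerset, TLB.wt (TLB.Om (Fin n) s) q F
      * ((TLB.cliq s k F).card : ℝ) = (n.choose k : ℝ) * q ^ (k.choose s) := by
    simpa [Fintype.card_fin] using TLB.exp_cliq (ι := Fin n) s k q
  have hexp2 : ∑ F ∈ (TLB.Om (Fin n) s).powerset, TLB.wt (TLB.Om (Fin n) s) q F
      * (∑ W ∈ TLB.badW s d v0 F, (W.card.choose s : ℝ))
      ≤ ∑ u ∈ Finset.range (v0 + 1), (n.choose u : ℝ)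
          * ((u.choose s : ℝ) * ((u.choose s).choose (TLB.tt d s u) : ℝ) * q ^ (TLB.tt d s u)) := by
    simpa [Fintype.card_fin] using
      TLB.exp_bad (ι := Fin n) (d := d) (v0 := v0) hs0 hq0.le hq1
  set Lsum : ℝ := ∑ u ∈ Finset.range (v0 + 1), (n.choose u : ℝ)
      * ((u.choose s : ℝ) * ((u.choose s).choose (TLB.tt d s u) : ℝ) * q ^ (TLB.tt d s u))
    with hLsum_def
  -- the per-F deletion bound, averaged
  have hXbound : (n.choose k : ℝ) * q ^ (k.choose s)
      ≤ (∑ F ∈ (TLB.Om (Fin n) s).powerset, TLB.wt (TLB.Om (Fin n) s) q F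
          * ((TLB.cliq s k (TLB.prune s d v0 F)).card : ℝ))
        + ((n.choose (k-s) : ℝ)) * Lsum := by
    rw [← hexp1]
    have hstep : ∀ F ∈ (TLB.Om (Fin n) s).powerset,
        TLB.wt (TLB.Om (Fin n) s) q F * ((TLB.cliq s k F).card : ℝ)
        ≤ TLB.wt (TLB.Om (Fin n) s) q F * ((TLB.cliq s k (TLB.prune s d v0 F)).card : ℝ)
          + (n.choose (k-s) : ℝ) * (TLB.wt (TLB.Om (Fin n) s) q F
              * (∑ W ∈ TLB.badW s d v0 F, (W.card.choose s : ℝ))) := by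
      intro F hF
      have hFsub : F ⊆ TLB.Om (Fin n) s := Finset.mem_powerset.1 hF
      have hcc := TLB.cliq_prune_card (d := d) (v0 := v0) (k := k) F hFsub
      have hccR : ((TLB.cliq s k F).card : ℝ)
          ≤ ((TLB.cliq s k (TLB.prune s d v0 F)).card : ℝ)
            + (∑ W ∈ TLB.badW s d v0 F, (W.card.choose s : ℝ)) * (n.choose (k-s) : ℝ) := by
        rw [Fintype.card_fin] at hcc
        push_cast
        exact_mod_cast hcc
      have hw := TLB.wt_nonneg (S := TLB.Om (Fin n) s) hq0.le hq1 F
      calc TLB.wt (TLB.Om (Fin n) s) q F * ((TLB.cliq s k F).card : ℝ)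
          ≤ TLB.wt (TLB.Om (Fin n) s) q F
            * (((TLB.cliq s k (TLB.prune s d v0 F)).card : ℝ)
              + (∑ W ∈ TLB.badW s d v0 F, (W.card.choose s : ℝ)) * (n.choose (k-s) : ℝ)) :=
            mul_le_mul_of_nonneg_left hccR hw
        _ = TLB.wt (TLB.Om (Fin n) s) q F * ((TLB.cliq s k (TLB.prune s d v0 F)).card : ℝ)
            + (n.choose (k-s) : ℝ) * (TLB.wt (TLB.Om (Fin n) s) q F
                * (∑ W ∈ TLB.badW s d v0 F, (W.card.choose s : ℝ))) := by ring
    calc ∑ F ∈ (TLB.Om (Fin n) s).powerset, TLB.wt (TLB.Om (Fin n) s) q F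
          * ((TLB.cliq s k F).card : ℝ)
        ≤ ∑ F ∈ (TLB.Om (Fin n) s).powerset,
            (TLB.wt (TLB.Om (Fin n) s) q F * ((TLB.cliq s k (TLB.prune s d v0 F)).card : ℝ)
              + (n.choose (k-s) : ℝ) * (TLB.wt (TLB.Om (Fin n) s) q F
                  * (∑ W ∈ TLB.badW s d v0 F, (W.card.choose s : ℝ)))) :=
          Finset.sum_le_sum hstep
      _ = (∑ F ∈ (TLB.Om (Fin n) s).powerset, TLB.wt (TLB.Om (Fin n) s) q F
              * ((TLB.cliq s k (TLB.prune s d v0 F)).card : ℝ))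
          + (n.choose (k-s) : ℝ) * (∑ F ∈ (TLB.Om (Fin n) s).powerset,
              TLB.wt (TLB.Om (Fin n) s) q F
                * (∑ W ∈ TLB.badW s d v0 F, (W.card.choose s : ℝ))) := by
          rw [Finset.sum_add_distrib, ← Finset.mul_sum]
      _ ≤ (∑ F ∈ (TLB.Om (Fin n) s).powerset, TLB.wt (TLB.Om (Fin n) s) q F
              * ((TLB.cliq s k (TLB.prune s d v0 F)).card : ℝ))
          + (n.choose (k-s) : ℝ) * Lsum := by
          have hnn : (0:ℝ) ≤ (n.choose (k-s) : ℝ) := by positivity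
          gcongr
  -- main term lower bound
  have hγC : γ * (k.choose s : ℝ) = (3:ℝ)^k / (d:ℝ) := by
    rw [hγ_def, hCk_def]
    field_simp
  have hqC : q ^ (k.choose s) = x ^ (-((3:ℝ)^k/(d:ℝ))) := by
    have h := hqpow (k.choose s)
    rw [hγC] at h
    exact h
  have hxsplit : x ^ ((k:ℝ) - (3:ℝ)^k/(d:ℝ)) = x ^ (k:ℕ) * x ^ (-((3:ℝ)^k/(d:ℝ))) := by
    rw [← Real.rpow_natCast x k, ← Real.rpow_add hx0, sub_eq_add_neg]
  have hchoose : x ^ (k:ℕ) / (2*(k:ℝ))^k ≤ (n.choose k : ℝ) := by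
    rw [div_le_iff₀ (by positivity)]
    have := TLB.choose_lower hk1 hn2k
    rw [hx_def]
    linarith
  have hMain : 2 * A * x ^ ((k:ℝ) - (3:ℝ)^k/(d:ℝ)) ≤ (n.choose k : ℝ) * q ^ (k.choose s) := by
    have hA2 : 2 * A = ((2*(k:ℝ))^k)⁻¹ := by
      rw [hA_def]
      field_simp
    rw [hqC, hA2, hxsplit]
    calc ((2*(k:ℝ))^k)⁻¹ * (x ^ (k:ℕ) * x ^ (-((3:ℝ)^k/(d:ℝ))))
        = (x ^ (k:ℕ) / (2*(k:ℝ))^k) * x ^ (-((3:ℝ)^k/(d:ℝ))) := by ring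
      _ ≤ (n.choose k : ℝ) * x ^ (-((3:ℝ)^k/(d:ℝ))) := by
          apply mul_le_mul_of_nonneg_right hchoose
          exact (Real.rpow_pos_of_pos hx0 _).le
  -- loss upper bound
  have hKns : (n.choose (k - s) : ℝ) ≤ x ^ ((k:ℝ) - (s:ℝ)) := by
    have h1 : (n.choose (k-s) : ℝ) ≤ (n:ℝ) ^ (k - s : ℕ) := by
      exact_mod_cast Nat.choose_le_pow n (k-s)
    rw [← Real.rpow_natCast (n:ℝ) (k-s)] at h1
    have h2 : ((k - s : ℕ) : ℝ) = (k:ℝ) - (s:ℝ) := by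
      rw [Nat.cast_sub hsk]
    rw [hx_def, ← h2]
    exact h1
  have hterm : ∀ u ∈ Finset.range (v0+1),
      (n.choose u : ℝ) * ((u.choose s : ℝ) * ((u.choose s).choose (TLB.tt d s u) : ℝ)
          * q ^ (TLB.tt d s u))
      ≤ ((u.choose s : ℝ) * (2:ℝ)^(u.choose s)) * x ^ ((s:ℝ) - (3:ℝ)^k/Ck) := by
    intro u _
    rcases Nat.lt_or_ge u s with hus | hus
    · rw [Nat.choose_eq_zero_of_lt hus]
      simp
    · have husR : (s:ℝ) ≤ (u:ℝ) := by exact_mod_cast hus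
      have h1 : (n.choose u : ℝ) ≤ x ^ ((u:ℕ):ℝ) := by
        rw [Real.rpow_natCast, hx_def]
        exact_mod_cast Nat.choose_le_pow n u
      have h2 : ((u.choose s).choose (TLB.tt d s u) : ℝ) ≤ (2:ℝ)^(u.choose s) := by
        exact_mod_cast TLB.choose_le_two_pow (u.choose s) (TLB.tt d s u)
      have h3 : x ^ ((u:ℕ):ℝ) * q ^ (TLB.tt d s u) ≤ x ^ ((s:ℝ) - (3:ℝ)^k/Ck) := by
        rw [hqpow, ← Real.rpow_add hx0]
        apply Real.rpow_le_rpow_of_exponent_le hx1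
        -- exponent inequality
        have hdu : (d:ℝ) * (u:ℝ) ≤ (s:ℝ) * ((TLB.tt d s u : ℕ) : ℝ) := by
          exact_mod_cast TLB.le_mul_ceil_div (d := d) (u := u) hs0
        have hβu : (3:ℝ)^k / (Ck * (s:ℝ)) * (u:ℝ) ≤ γ * ((TLB.tt d s u : ℕ) : ℝ) := by
          rw [hγ_def, div_mul_eq_mul_div, div_mul_eq_mul_div,
            div_le_div_iff₀ (by positivity) (by positivity)]
          have h4 := mul_le_mul_of_nonneg_left hdu
            (show (0:ℝ) ≤ (3:ℝ)^k * Ck by positivity)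
          nlinarith [h4]
        have hβ1 : (1:ℝ) ≤ (3:ℝ)^k / (Ck * (s:ℝ)) := by
          rw [le_div_iff₀ (by positivity)]
          have hcast : (s:ℝ) * Ck < (3:ℝ)^k := by
            rw [hCk_def]
            exact_mod_cast hsC3
          nlinarith [hcast]
        have hβs : (3:ℝ)^k / (Ck * (s:ℝ)) * (s:ℝ) = (3:ℝ)^k / Ck := by
          field_simp
        have h5 : (1:ℝ) * ((u:ℝ) - (s:ℝ)) ≤ (3:ℝ)^k / (Ck * (s:ℝ)) * ((u:ℝ) - (s:ℝ)) :=
          mul_le_mul_of_nonneg_right hβ1 (by linarith)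
        rw [one_mul, mul_sub] at h5
        linarith [hβu, h5, hβs.le, hβs.ge]
      calc (n.choose u : ℝ) * ((u.choose s : ℝ) * ((u.choose s).choose (TLB.tt d s u) : ℝ)
              * q ^ (TLB.tt d s u))
          ≤ x ^ ((u:ℕ):ℝ) * ((u.choose s : ℝ) * (2:ℝ)^(u.choose s) * q ^ (TLB.tt d s u)) := by
            apply mul_le_mul h1 ?_ (by positivity) (by positivity)
            apply mul_le_mul_of_nonneg_right _ (by positivity)
            exact mul_le_mul_of_nonneg_left h2 (by positivity)
        _ = ((u.choose s : ℝ) * (2:ℝ)^(u.choose s)) * (x ^ ((u:ℕ):ℝ) * q ^ (TLB.tt d s u)) := by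
            ring
        _ ≤ ((u.choose s : ℝ) * (2:ℝ)^(u.choose s)) * x ^ ((s:ℝ) - (3:ℝ)^k/Ck) :=
            mul_le_mul_of_nonneg_left h3 (by positivity)
  have hLsum : Lsum ≤ c2 * x ^ ((s:ℝ) - (3:ℝ)^k/Ck) := by
    rw [hLsum_def, hc2_def, Finset.sum_mul]
    exact Finset.sum_le_sum hterm
  have hLsum0 : 0 ≤ Lsum := by
    rw [hLsum_def]
    apply Finset.sum_nonneg
    intro u _
    positivity
  have hLoss : (n.choose (k-s) : ℝ) * Lsum ≤ A * x ^ ((k:ℝ) - (3:ℝ)^k/(d:ℝ)) := by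
    have hmerge : x ^ ((k:ℝ) - (s:ℝ)) * x ^ ((s:ℝ) - (3:ℝ)^k/Ck)
        = x ^ ((k:ℝ) - (3:ℝ)^k/Ck) := by
      rw [← Real.rpow_add hx0]
      congr 1; ring
    have hmerge2 : x ^ ε * x ^ ((k:ℝ) - (3:ℝ)^k/Ck) = x ^ ((k:ℝ) - (3:ℝ)^k/(d:ℝ)) := by
      rw [← Real.rpow_add hx0, hε_def]
      congr 1; ring
    calc (n.choose (k-s) : ℝ) * Lsum
        ≤ x ^ ((k:ℝ) - (s:ℝ)) * (c2 * x ^ ((s:ℝ) - (3:ℝ)^k/Ck)) := by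
          apply mul_le_mul hKns hLsum hLsum0 (by positivity)
      _ = c2 * (x ^ ((k:ℝ) - (s:ℝ)) * x ^ ((s:ℝ) - (3:ℝ)^k/Ck)) := by ring
      _ = c2 * x ^ ((k:ℝ) - (3:ℝ)^k/Ck) := by rw [hmerge]
      _ ≤ (A * x ^ ε) * x ^ ((k:ℝ) - (3:ℝ)^k/Ck) := by
          apply mul_le_mul_of_nonneg_right hc2n
          exact (Real.rpow_pos_of_pos hx0 _).le
      _ = A * (x ^ ε * x ^ ((k:ℝ) - (3:ℝ)^k/Ck)) := by ring
      _ = A * x ^ ((k:ℝ) - (3:ℝ)^k/(d:ℝ)) := by rw [hmerge2]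
  -- averaging: there is a good F
  have hEX : A * x ^ ((k:ℝ) - (3:ℝ)^k/(d:ℝ))
      ≤ ∑ F ∈ (TLB.Om (Fin n) s).powerset, TLB.wt (TLB.Om (Fin n) s) q F
          * ((TLB.cliq s k (TLB.prune s d v0 F)).card : ℝ) := by
    linarith [hXbound, hMain, hLoss]
  have hexistsF : ∃ F ∈ (TLB.Om (Fin n) s).powerset,
      A * x ^ ((k:ℝ) - (3:ℝ)^k/(d:ℝ)) ≤ ((TLB.cliq s k (TLB.prune s d v0 F)).card : ℝ) := by
    have hne : ((TLB.Om (Fin n) s).powerset).Nonempty :=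
      ⟨∅, Finset.mem_powerset.2 (Finset.empty_subset _)⟩
    have hsum1 : ∑ F ∈ (TLB.Om (Fin n) s).powerset,
        TLB.wt (TLB.Om (Fin n) s) q F * (A * x ^ ((k:ℝ) - (3:ℝ)^k/(d:ℝ)))
        = A * x ^ ((k:ℝ) - (3:ℝ)^k/(d:ℝ)) := by
      rw [← Finset.sum_mul, TLB.sum_wt, one_mul]
    have hsumle : ∑ F ∈ (TLB.Om (Fin n) s).powerset,
        TLB.wt (TLB.Om (Fin n) s) q F * (A * x ^ ((k:ℝ) - (3:ℝ)^k/(d:ℝ)))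
        ≤ ∑ F ∈ (TLB.Om (Fin n) s).powerset, TLB.wt (TLB.Om (Fin n) s) q F
            * ((TLB.cliq s k (TLB.prune s d v0 F)).card : ℝ) := by
      rw [hsum1]; exact hEX
    obtain ⟨F, hFmem, hle⟩ := Finset.exists_le_of_sum_le hne hsumle
    refine ⟨F, hFmem, ?_⟩
    have hw := TLB.wt_pos (S := TLB.Om (Fin n) s) hq0 hqlt F
    exact (mul_le_mul_iff_right₀ hw).1 hle
  obtain ⟨F, _, hFgood⟩ := hexistsF
  -- build the extremal hypergraph
  set Gedges : Finset (Finset (Fin n)) := TLB.cliq s k (TLB.prune s d v0 F) with hGe_def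
  have hGcard : ∀ e ∈ Gedges, e.card = k := by
    intro e he
    rw [hGe_def, TLB.cliq, Finset.mem_filter] at he
    exact Finset.mem_powersetCard_univ.1 he.1
  set G : HyperGraph k (Fin n) := ⟨Gedges, hGcard⟩ with hG_def
  have hfree : ¬ G.ContainsCopy H :=
    TLB.no_copy hd1 H le_rfl U0 hU0ne hU0 F G rfl
  have hmem : Gedges.card ∈ {m | ∃ G' : HyperGraph k (Fin n),
      G'.edges.card = m ∧ ¬ G'.ContainsCopy H} := ⟨G, rfl, hfree⟩
  have hbdd : BddAbove {m | ∃ G' : HyperGraph k (Fin n),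
      G'.edges.card = m ∧ ¬ G'.ContainsCopy H} := by
    refine ⟨Fintype.card (Finset (Fin n)), ?_⟩
    rintro m ⟨G', hG', -⟩
    rw [← hG']
    exact (Finset.card_le_univ _).trans_eq Finset.card_univ
  have hturan : Gedges.card ≤ turanNumber k n H := le_csSup hbdd hmem
  calc A * x ^ ((k:ℝ) - (3:ℝ)^k/(d:ℝ)) ≤ (Gedges.card : ℝ) := hFgood
    _ ≤ (turanNumber k n H : ℝ) := by exact_mod_cast hturan
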